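/- There exists a bounded positive measure ν on [0,1] (a Cantor-type measure with total mass 2^{3/2}) such that the averaging operator A_{1/2}(ν), defined via ball averages of ν with α = 1/2 in dimension D = 1, is in L^{1,∞}(ℝ) but not in L^{1,q}(ℝ) for any q < ∞. Concretely: with S_k = { Σ_{j=1}^k a_j 4^{-j} : a_j ∈ {0,2} }, f_k = 2^{3/2}·2^k·1_{A_k} where A_k = ∪_{x∈S_k}[x, x+4^{-k}), the functions f_k are uniformly bounded in L¹(ℝ) yet |{ A_{1/2}(f_j) ≥ 2^{-1/2}·2^k }| ≥ 2^{-k} for all k ≤ j, so sup_j ‖A_{1/2}(f_j)‖_{L^{1,q}(ℝ)} = ∞ for every q < ∞. -/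

import Mathlib

open MeasureTheory Metric ENNReal

noncomputable def ballAvg1 (f : ℝ → ℝ≥0∞) (ρ x : ℝ) : ℝ≥0∞ :=
  (∫⁻ y in Metric.ball x ρ, f y) / volume (Metric.ball x ρ)

noncomputable def scaleOp1 (α : ℝ) (f : ℝ → ℝ≥0∞) (x : ℝ) : ℝ≥0∞ :=
  sInf {s : ℝ≥0∞ | ∃ ρ : ℝ, 0 < ρ ∧ s = ENNReal.ofReal ρ ∧
    ENNReal.ofReal ρ ^ (-α) < ballAvg1 f ρ x}

noncomputable def avgOp1 (α : ℝ) (f : ℝ → ℝ≥0∞) (x : ℝ) : ℝ≥0∞ :=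
  scaleOp1 α f x ^ (-α)

/-- `S_k`: fractions whose base-4 expansion up to digit `k` uses only digits 0 and 2. -/
def cantorS (k : ℕ) : Set ℝ :=
  {x : ℝ | ∃ a : ℕ → ℝ, (∀ j, a j = 0 ∨ a j = 2) ∧
    x = ∑ j ∈ Finset.range k, a j * (4 : ℝ) ^ (-(j : ℤ) - 1)}

/-- `A_k = ∪_{x ∈ S_k} [x, x + 4^{-k})`. -/
def cantorA (k : ℕ) : Set ℝ :=
  ⋃ x ∈ cantorS k, Set.Ico x (x + (4 : ℝ) ^ (-(k : ℤ)))

/-- `f_j = 2^{3/2} · 2^j · 1_{A_j}`. -/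
noncomputable def cantorF (j : ℕ) : ℝ → ℝ≥0∞ :=
  (cantorA j).indicator fun _ => ENNReal.ofReal ((2 : ℝ) ^ ((3 : ℝ) / 2) * 2 ^ j)

/-- The Lorentz `L^{1,q}` quasinorm on `ℝ`. -/
noncomputable def L1qNorm (q : ℝ) (h : ℝ → ℝ≥0∞) : ℝ≥0∞ :=
  (∫⁻ l in Set.Ioi (0 : ℝ),
    (volume {x : ℝ | ENNReal.ofReal l < h x}) ^ q * ENNReal.ofReal (l ^ (q - 1))) ^ (1 / q)



lemma cantorS_zero : cantorS 0 = {0} := by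
  ext x
  simp only [cantorS, Set.mem_setOf_eq, Finset.range_zero, Finset.sum_empty, Set.mem_singleton_iff]
  constructor
  · rintro ⟨a, -, rfl⟩; rfl
  · rintro rfl; exact ⟨fun _ => 0, fun _ => Or.inl rfl, rfl⟩

lemma mem_cantorS_succ_iff {m : ℕ} {x : ℝ} :
    x ∈ cantorS (m+1) ↔ 4*x ∈ cantorS m ∨ 4*x - 2 ∈ cantorS m := by
  have key : ∀ (a : ℕ → ℝ),
      (∑ j ∈ Finset.range (m+1), a j * (4 : ℝ) ^ (-(j : ℤ) - 1)) =
        ((∑ j ∈ Finset.range m, a (j+1) * (4 : ℝ) ^ (-(j : ℤ) - 1)) + a 0) / 4 := by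
    intro a
    rw [Finset.sum_range_succ' (fun j => a j * (4 : ℝ) ^ (-(j : ℤ) - 1)) m,
      add_div, Finset.sum_div]
    congr 1
    · refine Finset.sum_congr rfl fun j _ => ?_
      have : (-(↑(j+1) : ℤ) - 1) = (-(j:ℤ) - 1) + (-1) := by push_cast; ring
      rw [this, zpow_add₀ (by norm_num : (4:ℝ) ≠ 0)]
      simp [div_eq_mul_inv]; ring
    · norm_num
      ring
  constructor
  · rintro ⟨a, ha, rfl⟩
    have h0 := ha 0
    rcases h0 with h0 | h0
    · left
      refine ⟨fun j => a (j+1), fun j => ha (j+1), ?_⟩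
      rw [key a, h0]; ring
    · right
      refine ⟨fun j => a (j+1), fun j => ha (j+1), ?_⟩
      rw [key a, h0]; ring
  · rintro (⟨b, hb, hs⟩ | ⟨b, hb, hs⟩)
    · refine ⟨fun n => if n = 0 then 0 else b (n-1), fun n => by by_cases h : n = 0 <;> simp [h, hb], ?_⟩
      rw [key]
      simp only [Nat.add_sub_cancel, if_neg (Nat.succ_ne_zero _)]
      norm_num
      linarith [hs]
    · refine ⟨fun n => if n = 0 then 2 else b (n-1), fun n => by by_cases h : n = 0 <;> simp [h, hb], ?_⟩
      rw [key]
      simp only [Nat.add_sub_cancel, if_neg (Nat.succ_ne_zero _)]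
      norm_num
      linarith [hs]

lemma zero_mem_cantorS (m : ℕ) : (0:ℝ) ∈ cantorS m :=
  ⟨fun _ => 0, fun _ => Or.inl rfl, by simp⟩

lemma half_mem_cantorS_one : (1/2 : ℝ) ∈ cantorS 1 :=
  ⟨fun _ => 2, fun _ => Or.inr rfl, by norm_num⟩

lemma cantorS_bound {m : ℕ} {x : ℝ} (hx : x ∈ cantorS m) :
    0 ≤ x ∧ x + (4:ℝ) ^ (-(m:ℤ)) ≤ 1 := by
  induction m generalizing x with
  | zero => rw [cantorS_zero] at hx; subst hx; norm_num
  | succ m ih =>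
    have h4 : (4:ℝ) ^ (-(↑(m+1):ℤ)) = (4:ℝ) ^ (-(m:ℤ)) / 4 := by
      rw [show (-(↑(m+1):ℤ)) = (-(m:ℤ)) + (-1) by push_cast; ring,
        zpow_add₀ (by norm_num : (4:ℝ) ≠ 0)]
      norm_num; ring
    rcases mem_cantorS_succ_iff.1 hx with h | h
    · obtain ⟨h1, h2⟩ := ih h
      constructor
      · linarith
      · rw [h4]; linarith
    · obtain ⟨h1, h2⟩ := ih h
      constructor
      · linarith
      · rw [h4]; linarith

lemma cantorS_concat {k m : ℕ} {p r : ℝ} (hp : p ∈ cantorS k) (hr : r ∈ cantorS m) :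
    p + (4:ℝ) ^ (-(k:ℤ)) * r ∈ cantorS (k + m) := by
  induction k generalizing p with
  | zero =>
    rw [cantorS_zero] at hp; subst hp
    simpa using hr
  | succ k ih =>
    have h4 : (4:ℝ) * (4:ℝ) ^ (-(↑(k+1):ℤ)) = (4:ℝ) ^ (-(k:ℤ)) := by
      rw [show (-(↑(k+1):ℤ)) = (-(k:ℤ)) + (-1) by push_cast; ring,
        zpow_add₀ (by norm_num : (4:ℝ) ≠ 0)]
      norm_num; ring
    have hkm : k + 1 + m = (k + m) + 1 := by omega
    rw [hkm]
    rcases mem_cantorS_succ_iff.1 hp with h | h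
    · have := ih h
      rw [mem_cantorS_succ_iff]
      left
      have : 4 * (p + (4:ℝ) ^ (-(↑(k+1):ℤ)) * r) = 4 * p + (4:ℝ) ^ (-(k:ℤ)) * r := by
        rw [← h4]; ring
      rw [this]
      exact ih h
    · rw [mem_cantorS_succ_iff]
      right
      have : 4 * (p + (4:ℝ) ^ (-(↑(k+1):ℤ)) * r) - 2 = (4 * p - 2) + (4:ℝ) ^ (-(k:ℤ)) * r := by
        rw [← h4]; ring
      rw [this]
      exact ih h

lemma cantorS_mono {k j : ℕ} (h : k ≤ j) : cantorS k ⊆ cantorS j := by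
  intro p hp
  have := cantorS_concat hp (zero_mem_cantorS (j - k))
  rw [mul_zero, add_zero, Nat.add_sub_cancel' h] at this
  exact this

noncomputable def cantorP (m : ℕ) (l : ℝ) : Set ℝ := ⋃ p ∈ cantorS m, Set.Ico p (p + l)

lemma cantorP_succ (m : ℕ) (l : ℝ) :
    cantorP (m+1) l =
      (fun x : ℝ => 4*x) ⁻¹' cantorP m (4*l) ∪ (fun x : ℝ => 4*x - 2) ⁻¹' cantorP m (4*l) := by
  ext x
  simp only [cantorP, Set.mem_iUnion, Set.mem_Ico, Set.mem_union, Set.mem_preimage,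
    exists_prop]
  constructor
  · rintro ⟨s, hs, h1, h2⟩
    rcases mem_cantorS_succ_iff.1 hs with h | h
    · exact Or.inl ⟨4*s, h, by constructor <;> linarith⟩
    · exact Or.inr ⟨4*s - 2, h, by constructor <;> linarith⟩
  · rintro (⟨r, hr, h1, h2⟩ | ⟨r, hr, h1, h2⟩)
    · refine ⟨r/4, ?_, by linarith, by linarith⟩
      rw [mem_cantorS_succ_iff]
      left
      rwa [show 4*(r/4) = r by ring]
    · refine ⟨(r+2)/4, ?_, by linarith, by linarith⟩
      rw [mem_cantorS_succ_iff]
      right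
      rwa [show 4*((r+2)/4) - 2 = r by ring]

lemma measurableSet_cantorP (m : ℕ) (l : ℝ) : MeasurableSet (cantorP m l) := by
  induction m generalizing l with
  | zero =>
    have : cantorP 0 l = Set.Ico 0 l := by
      simp [cantorP, cantorS_zero]
    rw [this]; exact measurableSet_Ico
  | succ m ih =>
    rw [cantorP_succ]
    exact ((ih _).preimage (by fun_prop)).union ((ih _).preimage (by fun_prop))

lemma cantorP_subset (m : ℕ) {l : ℝ} (hl : l ≤ (4:ℝ) ^ (-(m:ℤ))) :
    cantorP m l ⊆ Set.Ico 0 1 := by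
  intro x hx
  simp only [cantorP, Set.mem_iUnion, Set.mem_Ico, exists_prop] at hx ⊢
  obtain ⟨p, hp, h1, h2⟩ := hx
  obtain ⟨hb1, hb2⟩ := cantorS_bound hp
  exact ⟨le_trans hb1 h1, by linarith⟩

lemma volume_cantorP (m : ℕ) {l : ℝ} (h0 : 0 ≤ l) (h1 : (4:ℝ)^m * l ≤ 1) :
    volume (cantorP m l) = ENNReal.ofReal ((2:ℝ)^m * l) := by
  induction m generalizing l with
  | zero =>
    have : cantorP 0 l = Set.Ico 0 l := by simp [cantorP, cantorS_zero]
    rw [this, Real.volume_Ico]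
    norm_num
  | succ m ih =>
    have hl4 : (4:ℝ)^m * (4*l) ≤ 1 := by
      rw [pow_succ] at h1; linarith
    have hll : 4*l ≤ (4:ℝ) ^ (-(m:ℤ)) := by
      rw [zpow_neg, zpow_natCast, ← one_div, le_div_iff₀ (by positivity)]
      nlinarith [pow_pos (by norm_num : (0:ℝ) < 4) m]
    have hsub := cantorP_subset m hll
    have hdisj : Disjoint ((fun x : ℝ => 4*x) ⁻¹' cantorP m (4*l))
        ((fun x : ℝ => 4*x - 2) ⁻¹' cantorP m (4*l)) := by
      rw [Set.disjoint_left]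
      intro x h1 h2
      have b1 := hsub h1
      have b2 := hsub h2
      simp only [Set.mem_Ico] at b1 b2
      linarith [b1.2, b2.1]
    have hm2 : MeasurableSet ((fun x : ℝ => 4*x - 2) ⁻¹' cantorP m (4*l)) :=
      (measurableSet_cantorP m (4*l)).preimage (by fun_prop)
    rw [cantorP_succ, measure_union hdisj hm2]
    have e1 : volume ((fun x : ℝ => 4*x) ⁻¹' cantorP m (4*l)) =
        ENNReal.ofReal |(4:ℝ)⁻¹| * volume (cantorP m (4*l)) :=
      Real.volume_preimage_mul_left (by norm_num : (4:ℝ) ≠ 0) _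
    have e2 : volume ((fun x : ℝ => 4*x - 2) ⁻¹' cantorP m (4*l)) =
        ENNReal.ofReal |(4:ℝ)⁻¹| * volume (cantorP m (4*l)) := by
      have : (fun x : ℝ => 4*x - 2) ⁻¹' cantorP m (4*l) =
          (fun x : ℝ => 4*x) ⁻¹' ((fun y : ℝ => y + (-2)) ⁻¹' cantorP m (4*l)) := by
        ext x; simp [sub_eq_add_neg]
      rw [this, Real.volume_preimage_mul_left (by norm_num : (4:ℝ) ≠ 0),
        measure_preimage_add_right volume (-2) _]
    rw [e1, e2, ih (by linarith) hl4]
    rw [← ENNReal.ofReal_mul (by positivity), ← ENNReal.ofReal_add (by positivity) (by positivity)]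
    congr 1
    rw [abs_of_pos (by norm_num : (0:ℝ) < (4:ℝ)⁻¹)]
    ring


lemma cantorA_eq (k : ℕ) : cantorA k = cantorP k ((4:ℝ)^(-(k:ℤ))) := rfl

lemma four_zpow_cancel (n : ℕ) : (4:ℝ)^(-(n:ℤ)) * ((2:ℝ)^n * (2:ℝ)^n) = 1 := by
  rw [zpow_neg, zpow_natCast]
  rw [show (4:ℝ) = 2*2 by norm_num, mul_pow]
  rw [inv_mul_cancel₀ (by positivity)]

lemma four_zpow_pos (n : ℕ) : 0 < (4:ℝ)^(-(n:ℤ)) := by positivity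

lemma volume_cantorA (k : ℕ) :
    volume (cantorA k) = ENNReal.ofReal ((2:ℝ)^k * (4:ℝ)^(-(k:ℤ))) := by
  rw [cantorA_eq]
  refine volume_cantorP k (le_of_lt (four_zpow_pos k)) ?_
  rw [zpow_neg, zpow_natCast, mul_inv_cancel₀ (by positivity)]

lemma measurableSet_cantorA (k : ℕ) : MeasurableSet (cantorA k) := by
  rw [cantorA_eq]; exact measurableSet_cantorP _ _

lemma part1 (j : ℕ) : (∫⁻ x, cantorF j x) ≤ ENNReal.ofReal ((2 : ℝ) ^ ((3 : ℝ) / 2)) := by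
  have : (∫⁻ x, cantorF j x) =
      ENNReal.ofReal ((2 : ℝ) ^ ((3 : ℝ) / 2) * 2 ^ j) * volume (cantorA j) := by
    rw [cantorF, lintegral_indicator (measurableSet_cantorA j), setLIntegral_const]
  rw [this, volume_cantorA, ← ENNReal.ofReal_mul (by positivity)]
  apply ENNReal.ofReal_le_ofReal
  have h := four_zpow_cancel j
  have hp : (0:ℝ) < (2:ℝ)^((3:ℝ)/2) := by positivity
  nlinarith [h, hp]

lemma rho_rpow (k : ℕ) :
    ((2:ℝ) * (4:ℝ)^(-(k:ℤ))) ^ (-(1/2) : ℝ) = (2:ℝ)^(-(1:ℝ)/2) * 2^k := by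
  have hb : (2:ℝ) * (4:ℝ)^(-(k:ℤ)) = (2:ℝ) ^ ((1 : ℝ) + (-(2*(k:ℝ)))) := by
    rw [Real.rpow_add two_pos, Real.rpow_one]
    congr 1
    rw [show (-(2*(k:ℝ))) = ((-(2*(k:ℕ)) : ℤ) : ℝ) by push_cast; ring, Real.rpow_intCast]
    rw [show (4:ℝ) = (2:ℝ)^(2:ℤ) by norm_num, ← zpow_mul]
    congr 1
    push_cast; ring
  rw [hb, ← Real.rpow_natCast 2 k, ← Real.rpow_mul (by norm_num : (0:ℝ) ≤ 2),
    ← Real.rpow_add two_pos]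
  congr 1
  push_cast; ring

lemma mem_cantorA_of {j : ℕ} {r y : ℝ} (hr : r ∈ cantorS j) (h1 : r ≤ y)
    (h2 : y < r + (4:ℝ)^(-(j:ℤ))) : y ∈ cantorA j := by
  simp only [cantorA, Set.mem_iUnion, Set.mem_Ico, exists_prop]
  exact ⟨r, hr, h1, h2⟩

lemma avg_lower {K m : ℕ} {p x : ℝ} (hp : p ∈ cantorS K)
    (hx1 : p < x) (hx2 : x < p + 2 * (4:ℝ)^(-((K+1:ℕ):ℤ))) :
    ENNReal.ofReal ((2:ℝ)^(-(1:ℝ)/2) * 2^(K+1)) ≤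
      avgOp1 (1/2) (cantorF ((K+1)+m)) x := by
  set k := K + 1 with hk
  set j := k + m with hj
  set ε := (4:ℝ)^(-(k:ℤ)) with hε'
  have hε : 0 < ε := four_zpow_pos k
  have hεm : 0 < (4:ℝ)^(-(m:ℤ)) := four_zpow_pos m
  have hεj : 0 < (4:ℝ)^(-(j:ℤ)) := four_zpow_pos j
  set ρ := 2 * ε with hρ'
  have hρ : 0 < ρ := by positivity
  -- q = p + 2ε ∈ S k
  have hq : p + 2*ε ∈ cantorS k := by
    have h := cantorS_concat hp half_mem_cantorS_one
    have h44 : (4:ℝ)^(-(K:ℤ)) * (1/2) = 2 * ε := by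
      rw [hε', hk, show (-((K+1:ℕ):ℤ)) = (-(K:ℤ)) + (-1) by push_cast; ring,
        zpow_add₀ (by norm_num : (4:ℝ) ≠ 0)]
      norm_num; ring
    rwa [h44] at h
  have hpk : p ∈ cantorS k := cantorS_mono (Nat.le_succ K) hp
  have hpj : p ∈ cantorS j := cantorS_mono (Nat.le_add_right k m) hpk
  have hqj : p + 2*ε ∈ cantorS j := cantorS_mono (Nat.le_add_right k m) hq
  have h4j : (4:ℝ)^(-(j:ℤ)) = ε * (4:ℝ)^(-(m:ℤ)) := by
    rw [hε', hj, ← zpow_add₀ (by norm_num : (4:ℝ) ≠ 0)]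
    congr 1; push_cast; ring
  have h4k : ε * (4:ℝ)^(k:ℕ) = 1 := by
    rw [hε', zpow_neg, zpow_natCast, inv_mul_cancel₀ (by positivity)]
  -- T1
  set T1 : Set ℝ := (fun y => (y - p) * (4:ℝ)^(k:ℕ)) ⁻¹' cantorA m with hT1'
  have hT1mem : ∀ y ∈ T1, y ∈ cantorA j ∧ p ≤ y ∧ y < p + ε := by
    intro y hy
    simp only [hT1', Set.mem_preimage, cantorA, Set.mem_iUnion, Set.mem_Ico, exists_prop] at hy
    obtain ⟨r, hr, hz1, hz2⟩ := hy
    obtain ⟨hr0, hr1⟩ := cantorS_bound hr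
    have hzy : ε * ((y - p) * (4:ℝ)^(k:ℕ)) = y - p := by
      calc ε * ((y - p) * (4:ℝ)^(k:ℕ)) = (y - p) * (ε * (4:ℝ)^(k:ℕ)) := by ring
      _ = y - p := by rw [h4k]; ring
    have hy1 : p + ε * r ≤ y := by
      have := mul_le_mul_of_nonneg_left hz1 hε.le
      rw [hzy] at this
      linarith
    have hy2' : y - p < ε * r + ε * (4:ℝ)^(-(m:ℤ)) := by
      have := mul_lt_mul_of_pos_left hz2 hε
      rw [hzy] at this
      linarith [this, mul_add ε r ((4:ℝ)^(-(m:ℤ)))]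
    have hy2 : y < p + ε * r + (4:ℝ)^(-(j:ℤ)) := by
      rw [h4j]; linarith
    refine ⟨mem_cantorA_of (cantorS_concat hpk hr) hy1 hy2, ?_, ?_⟩
    · nlinarith [mul_nonneg hε.le hr0]
    · have h5 := mul_le_mul_of_nonneg_left hr1 hε.le
      rw [mul_add] at h5
      linarith
  have hT1vol : volume T1 = ENNReal.ofReal (ε * ((2:ℝ)^m * (4:ℝ)^(-(m:ℤ)))) := by
    have hset : T1 = (fun y : ℝ => y + (-p)) ⁻¹' ((· * (4:ℝ)^(k:ℕ)) ⁻¹' cantorA m) := by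
      ext y; simp [hT1', sub_eq_add_neg]
    rw [hset, measure_preimage_add_right volume (-p) _,
      Real.volume_preimage_mul_right (by positivity : ((4:ℝ)^(k:ℕ)) ≠ 0),
      volume_cantorA m, ← ENNReal.ofReal_mul (by positivity)]
    congr 1
    rw [abs_of_pos (by positivity)]
    have : ((4:ℝ)^(k:ℕ))⁻¹ = ε := by
      rw [hε', zpow_neg, zpow_natCast]
    rw [this]
  -- T2
  set δ := min ((4:ℝ)^(-(j:ℤ))) (x - p) with hδ'
  have hδ : 0 < δ := lt_min hεj (by linarith)
  set T2 : Set ℝ := Set.Ico (p + 2*ε) (p + 2*ε + δ) with hT2'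
  have hT2sub : T2 ⊆ cantorA j ∩ ball x ρ := by
    intro y hy
    simp only [hT2', Set.mem_Ico] at hy
    obtain ⟨h1, h2⟩ := hy
    constructor
    · exact mem_cantorA_of hqj h1 (by
        have : δ ≤ (4:ℝ)^(-(j:ℤ)) := min_le_left _ _
        linarith)
    · rw [Real.ball_eq_Ioo]
      have hδx : δ ≤ x - p := min_le_right _ _
      refine Set.mem_Ioo.2 ⟨by linarith, by linarith⟩
  have hT1sub : T1 ⊆ cantorA j ∩ ball x ρ := by
    intro y hy
    obtain ⟨hA, h1, h2⟩ := hT1mem y hy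
    refine ⟨hA, ?_⟩
    rw [Real.ball_eq_Ioo, Set.mem_Ioo]
    constructor <;> linarith
  have hdisj : Disjoint T1 T2 := by
    rw [Set.disjoint_left]
    intro y hy1 hy2
    obtain ⟨-, -, h2⟩ := hT1mem y hy1
    simp only [hT2', Set.mem_Ico] at hy2
    linarith [hy2.1]
  have hvol : ENNReal.ofReal (ε * ((2:ℝ)^m * (4:ℝ)^(-(m:ℤ))) + δ) ≤
      volume (cantorA j ∩ ball x ρ) := by
    have : volume (T1 ∪ T2) = volume T1 + volume T2 :=
      measure_union hdisj (measurableSet_Ico : MeasurableSet T2)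
    have hle : volume (T1 ∪ T2) ≤ volume (cantorA j ∩ ball x ρ) :=
      measure_mono (Set.union_subset hT1sub hT2sub)
    rw [this, hT1vol] at hle
    have : volume T2 = ENNReal.ofReal δ := by
      rw [hT2', Real.volume_Ico]
      congr 1; ring
    rw [this, ← ENNReal.ofReal_add (by positivity) hδ.le] at hle
    exact hle
  -- the average
  have hNge : ENNReal.ofReal (((2:ℝ)^((3:ℝ)/2) * 2^j) * (ε * ((2:ℝ)^m * (4:ℝ)^(-(m:ℤ))) + δ)) ≤
      (∫⁻ y in Metric.ball x ρ, cantorF j y) := by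
    have heq : (∫⁻ y in Metric.ball x ρ, cantorF j y) =
        ENNReal.ofReal ((2:ℝ)^((3:ℝ)/2) * 2^j) * volume (cantorA j ∩ ball x ρ) := by
      rw [cantorF, lintegral_indicator (measurableSet_cantorA j), setLIntegral_const,
        Measure.restrict_apply (measurableSet_cantorA j)]
    rw [heq, ENNReal.ofReal_mul (by positivity)]
    exact mul_le_mul_right hvol _
  have hstrict : ENNReal.ofReal ρ ^ (-(1/2 : ℝ)) < ballAvg1 (cantorF j) ρ x := by
    rw [ballAvg1, Real.volume_ball]
    rw [ENNReal.lt_div_iff_mul_lt (Or.inl (by simp [hρ])) (Or.inl ENNReal.ofReal_ne_top)]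
    rw [ENNReal.ofReal_rpow_of_pos hρ, ← ENNReal.ofReal_mul (by positivity)]
    refine lt_of_lt_of_le ?_ hNge
    rw [ENNReal.ofReal_lt_ofReal_iff (by positivity)]
    have hrr : ρ ^ (-(1/2):ℝ) = (2:ℝ)^(-(1:ℝ)/2) * 2^k := by
      rw [hρ', hε']; exact rho_rpow k
    rw [hrr]
    have hc32 : (2:ℝ)^((3:ℝ)/2) = (2:ℝ)^(-(1:ℝ)/2) * 4 := by
      rw [show ((3:ℝ)/2) = (-(1:ℝ)/2) + 2 by norm_num, Real.rpow_add two_pos]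
      norm_num
    have hkey : ((2:ℝ)^((3:ℝ)/2) * 2^j) * (ε * ((2:ℝ)^m * (4:ℝ)^(-(m:ℤ)))) =
        (2:ℝ)^(-(1:ℝ)/2) * 2^k * (2 * ρ) := by
      rw [hc32, hρ', hj, pow_add]
      linear_combination (4 * ((2:ℝ)^(-(1:ℝ)/2)) * (2:ℝ)^(k:ℕ) * ε) * four_zpow_cancel m
    have hpos : 0 < ((2:ℝ)^((3:ℝ)/2) * 2^j) := by positivity
    nlinarith [mul_pos hpos hδ]
  have hscale : scaleOp1 (1/2) (cantorF j) x ≤ ENNReal.ofReal ρ := by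
    apply sInf_le
    exact ⟨ρ, hρ, rfl, hstrict⟩
  -- conclude
  rw [avgOp1]
  have hmono : ENNReal.ofReal ρ ^ (-(1/2:ℝ)) ≤ scaleOp1 (1/2) (cantorF j) x ^ (-(1/2:ℝ)) := by
    rw [ENNReal.rpow_neg, ENNReal.rpow_neg]
    exact ENNReal.inv_le_inv.2 (ENNReal.rpow_le_rpow hscale (by norm_num))
  have : ENNReal.ofReal ((2:ℝ)^(-(1:ℝ)/2) * 2^k) = ENNReal.ofReal ρ ^ (-(1/2:ℝ)) := by
    rw [ENNReal.ofReal_rpow_of_pos hρ]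
    congr 1
    rw [hρ', hε', rho_rpow k]
  rw [this]
  exact hmono

lemma cantorS_finite (m : ℕ) : (cantorS m).Finite := by
  induction m with
  | zero => rw [cantorS_zero]; exact Set.finite_singleton 0
  | succ m ih =>
    refine Set.Finite.subset ((ih.image (fun y => y/4)).union (ih.image (fun y => (y+2)/4))) ?_
    intro x hx
    rcases mem_cantorS_succ_iff.1 hx with h | h
    · exact Or.inl ⟨4*x, h, by ring⟩
    · exact Or.inr ⟨4*x - 2, h, by ring⟩

lemma part2 (k j : ℕ) (hk : 1 ≤ k) (hkj : k ≤ j) :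
    ENNReal.ofReal ((2 : ℝ) ^ (-(k : ℤ))) ≤
      volume {x : ℝ |
        ENNReal.ofReal ((2 : ℝ) ^ (-(1 : ℝ) / 2) * 2 ^ k) ≤ avgOp1 (1 / 2) (cantorF j) x} := by
  obtain ⟨K, rfl⟩ : ∃ K, k = K + 1 := ⟨k - 1, by omega⟩
  obtain ⟨m, rfl⟩ : ∃ m, j = (K+1) + m := ⟨j - (K+1), by omega⟩
  set ε := (4:ℝ)^(-((K+1:ℕ):ℤ)) with hε'
  have hε : 0 < ε := four_zpow_pos (K+1)
  have hsub : cantorP K (2*ε) \ cantorS K ⊆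
      {x : ℝ | ENNReal.ofReal ((2 : ℝ) ^ (-(1 : ℝ) / 2) * 2 ^ (K+1)) ≤
        avgOp1 (1 / 2) (cantorF ((K+1)+m)) x} := by
    rintro x ⟨hx, hxs⟩
    simp only [cantorP, Set.mem_iUnion, Set.mem_Ico, exists_prop] at hx
    obtain ⟨p, hp, h1, h2⟩ := hx
    have hne : p < x := lt_of_le_of_ne h1 (by rintro rfl; exact hxs hp)
    exact avg_lower hp hne h2
  have hnull : volume (cantorS K) = 0 := (cantorS_finite K).measure_zero _
  have hvol : volume (cantorP K (2*ε) \ cantorS K) = ENNReal.ofReal ((2:ℝ)^(-((K+1:ℕ):ℤ)) ) := by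
    rw [measure_diff_null hnull]
    rw [volume_cantorP K (by positivity) ?_]
    · congr 1
      have h1 := four_zpow_cancel (K+1)
      have h2 : (2:ℝ)^(-((K+1:ℕ):ℤ)) = ((2:ℝ)^(K+1:ℕ))⁻¹ := by
        rw [zpow_neg, zpow_natCast]
      rw [h2]
      have h3 : (2:ℝ)^(K+1:ℕ) ≠ 0 := by positivity
      field_simp
      linear_combination h1
    · have h5 : ε = ((4:ℝ)^(K+1:ℕ))⁻¹ := by rw [hε', zpow_neg, zpow_natCast]
      have h6 : (0:ℝ) < (4:ℝ)^(K:ℕ) := by positivity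
      have h7 : (4:ℝ)^(K:ℕ) * (2 * ((4:ℝ)^(K+1:ℕ))⁻¹) = 1/2 := by
        rw [pow_succ]
        field_simp
        ring
      rw [h5, h7]
      norm_num
  rw [← hvol]
  exact measure_mono hsub

lemma part3 (q : ℝ) (hq : 0 < q) :
    (⨆ j : ℕ, L1qNorm q (avgOp1 (1 / 2) (cantorF j))) = ⊤ := by
  set c := (2:ℝ)^(-(1:ℝ)/2) with hc'
  have hc : 0 < c := Real.rpow_pos_of_pos two_pos _
  set M := min (1:ℝ) ((2:ℝ)^(q-1)) with hM'
  have hM : 0 < M := lt_min one_pos (Real.rpow_pos_of_pos two_pos _)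
  set C0 := (c/2)^q * M with hC0'
  have hC0 : 0 < C0 := mul_pos (Real.rpow_pos_of_pos (by positivity) _) hM
  have hI : ∀ j : ℕ, (j : ℝ≥0∞) * ENNReal.ofReal C0 ≤
      ∫⁻ l in Set.Ioi (0:ℝ),
        (volume {x : ℝ | ENNReal.ofReal l < avgOp1 (1/2) (cantorF j) x}) ^ q *
          ENNReal.ofReal (l ^ (q - 1)) := by
    intro j
    set F : ℝ → ℝ≥0∞ := fun l =>
      (volume {x : ℝ | ENNReal.ofReal l < avgOp1 (1/2) (cantorF j) x}) ^ q *
        ENNReal.ofReal (l ^ (q - 1)) with hF'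
    have hpiece : ∀ k ∈ Finset.Icc 1 j,
        ENNReal.ofReal C0 ≤ ∫⁻ l in Set.Ioo (c*2^k/2) (c*2^k), F l := by
      intro k hk
      simp only [Finset.mem_Icc] at hk
      have hak : (0:ℝ) < c*2^k/2 := by positivity
      have hpt : ∀ l ∈ Set.Ioo (c*2^k/2) (c*2^k),
          ENNReal.ofReal (((2:ℝ)^(-(k:ℤ)))^q * ((c*2^k/2)^(q-1) * M)) ≤ F l := by
        intro l hl
        obtain ⟨hl1, hl2⟩ := hl
        have hl0 : (0:ℝ) < l := lt_trans hak hl1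
        have hd : ENNReal.ofReal ((2:ℝ)^(-(k:ℤ))) ≤
            volume {x : ℝ | ENNReal.ofReal l < avgOp1 (1/2) (cantorF j) x} := by
          refine le_trans (part2 k j hk.1 hk.2) (measure_mono ?_)
          intro x hx
          simp only [Set.mem_setOf_eq] at hx ⊢
          refine lt_of_lt_of_le ?_ hx
          rw [ENNReal.ofReal_lt_ofReal_iff (by positivity)]
          rw [show (2:ℝ)^(-(1:ℝ)/2) * 2^k = c * 2^k from rfl]
          exact hl2
        have hdq : ENNReal.ofReal (((2:ℝ)^(-(k:ℤ)))^q) ≤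
            (volume {x : ℝ | ENNReal.ofReal l < avgOp1 (1/2) (cantorF j) x}) ^ q := by
          rw [← ENNReal.ofReal_rpow_of_pos (four_zpow_pos k |> fun _ => by positivity)]
          exact ENNReal.rpow_le_rpow hd hq.le
        have hlq : (c*2^k/2)^(q-1) * M ≤ l^(q-1) := by
          rcases le_total 1 q with h | h
          · have h1 := Real.rpow_le_rpow hak.le hl1.le (by linarith : (0:ℝ) ≤ q - 1)
            have hm1 : M ≤ 1 := min_le_left _ _
            nlinarith [Real.rpow_nonneg hak.le (q-1)]
          · have h1 := Real.rpow_le_rpow_of_nonpos hl0 hl2.le (by linarith : q - 1 ≤ 0)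
            have h2 : (c*2^k : ℝ) = 2 * (c*2^k/2) := by ring
            have h3 : ((2:ℝ) * (c*2^k/2))^(q-1) = (2:ℝ)^(q-1) * (c*2^k/2)^(q-1) :=
              Real.mul_rpow (by norm_num) hak.le
            have hm2 : M ≤ (2:ℝ)^(q-1) := min_le_right _ _
            rw [h2, h3] at h1
            nlinarith [Real.rpow_nonneg hak.le (q-1)]
        rw [hF', ENNReal.ofReal_mul (by positivity)]
        exact mul_le_mul' hdq (ENNReal.ofReal_le_ofReal hlq)
      have hmono : ∫⁻ _l in Set.Ioo (c*2^k/2) (c*2^k),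
            ENNReal.ofReal (((2:ℝ)^(-(k:ℤ)))^q * ((c*2^k/2)^(q-1) * M)) ≤
          ∫⁻ l in Set.Ioo (c*2^k/2) (c*2^k), F l :=
        setLIntegral_mono' measurableSet_Ioo hpt
      rw [setLIntegral_const, Real.volume_Ioo] at hmono
      refine le_trans ?_ hmono
      rw [← ENNReal.ofReal_mul (by positivity)]
      apply ENNReal.ofReal_le_ofReal
      have e1 : c*2^k - c*2^k/2 = c*2^k/2 := by ring
      have e2 : ((c*2^k/2:ℝ))^(q-1) * (c*2^k/2) = (c*2^k/2)^q := by
        calc ((c*2^k/2:ℝ))^(q-1) * (c*2^k/2)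
            = (c*2^k/2:ℝ)^(q-1) * (c*2^k/2)^(1:ℝ) := by rw [Real.rpow_one]
          _ = (c*2^k/2:ℝ)^(q-1+1) := (Real.rpow_add hak _ _).symm
          _ = (c*2^k/2:ℝ)^q := by norm_num
      have e4 : (2:ℝ)^(-(k:ℤ)) * (c*2^k/2) = c/2 := by
        rw [zpow_neg, zpow_natCast]
        have : ((2:ℝ)^(k:ℕ)) ≠ 0 := by positivity
        field_simp
      have e3 : ((2:ℝ)^(-(k:ℤ)))^q * ((c*2^k/2))^q = (c/2)^q := by
        rw [← Real.mul_rpow (by positivity) (by positivity), e4]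
      calc C0 = ((2:ℝ)^(-(k:ℤ)))^q * ((c*2^k/2))^q * M := by rw [hC0', e3]
        _ = ((2:ℝ)^(-(k:ℤ)))^q * ((c*2^k/2)^(q-1) * M) * (c*2^k - c*2^k/2) := by
            rw [e1, ← e2]; ring
        _ ≤ _ := le_refl _
    have hdisjU : (↑(Finset.Icc 1 j) : Set ℕ).PairwiseDisjoint
        (fun k => Set.Ioo (c*2^k/2) (c*2^k)) := by
      intro k1 _ k2 _ hne
      have key : ∀ a b : ℕ, a < b → Disjoint (Set.Ioo (c*2^a/2) (c*2^a)) (Set.Ioo (c*2^b/2) (c*2^b)) := by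
        intro a b hab
        rw [Set.disjoint_left]
        intro l h1 h2
        have hpow : (2:ℝ)^a * 2 ≤ (2:ℝ)^b := by
          calc (2:ℝ)^a * 2 = 2^(a+1) := by rw [pow_succ]
            _ ≤ 2^b := by
              apply pow_le_pow_right₀ (by norm_num : (1:ℝ) ≤ 2) (by omega)
        have := h1.2
        have := h2.1
        nlinarith
      rcases lt_or_gt_of_ne hne with h | h
      · exact key _ _ h
      · exact (key _ _ h).symm
    have hcover : (⋃ k ∈ Finset.Icc 1 j, Set.Ioo (c*2^k/2) (c*2^k)) ⊆ Set.Ioi (0:ℝ) := by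
      intro l hl
      simp only [Set.mem_iUnion, Set.mem_Ioo, exists_prop] at hl
      obtain ⟨k, -, h1, -⟩ := hl
      have : (0:ℝ) < c*2^k/2 := by positivity
      exact lt_trans this h1
    calc (j : ℝ≥0∞) * ENNReal.ofReal C0
        = ∑ _k ∈ Finset.Icc 1 j, ENNReal.ofReal C0 := by
          rw [Finset.sum_const, Nat.card_Icc, nsmul_eq_mul]
          norm_num
      _ ≤ ∑ k ∈ Finset.Icc 1 j, ∫⁻ l in Set.Ioo (c*2^k/2) (c*2^k), F l :=
          Finset.sum_le_sum hpiece
      _ = ∫⁻ l in ⋃ k ∈ Finset.Icc 1 j, Set.Ioo (c*2^k/2) (c*2^k), F l :=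
          (lintegral_biUnion_finset hdisjU (fun _ _ => measurableSet_Ioo) F).symm
      _ ≤ ∫⁻ l in Set.Ioi (0:ℝ), F l := lintegral_mono_set hcover
  -- conclude
  rw [eq_top_iff, ← ENNReal.iSup_natCast]
  refine iSup_le fun n => ?_
  have hCne : ENNReal.ofReal C0 ≠ 0 := (ENNReal.ofReal_pos.2 hC0).ne'
  have hne : ((n:ℝ≥0∞))^q / ENNReal.ofReal C0 ≠ ⊤ :=
    (ENNReal.div_lt_top (ENNReal.rpow_ne_top_of_nonneg hq.le (ENNReal.natCast_ne_top n))
      hCne).ne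
  obtain ⟨j, hj⟩ := ENNReal.exists_nat_gt hne
  refine le_trans ?_ (le_iSup (fun j => L1qNorm q (avgOp1 (1 / 2) (cantorF j))) j)
  have h1 : ((n:ℝ≥0∞))^q ≤ (j : ℝ≥0∞) * ENNReal.ofReal C0 :=
    le_of_lt ((ENNReal.div_lt_iff (Or.inl hCne) (Or.inl ENNReal.ofReal_ne_top)).1 hj)
  have h2 : ((n:ℝ≥0∞)) = (((n:ℝ≥0∞))^q)^(1/q) := by
    rw [← ENNReal.rpow_mul, mul_one_div_cancel hq.ne', ENNReal.rpow_one]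
  rw [L1qNorm, h2]
  exact ENNReal.rpow_le_rpow (le_trans h1 (hI j)) (by positivity)

theorem stmt17 :
    (∀ j : ℕ, (∫⁻ x, cantorF j x) ≤ ENNReal.ofReal ((2 : ℝ) ^ ((3 : ℝ) / 2))) ∧
    (∀ k j : ℕ, 1 ≤ k → k ≤ j →
      ENNReal.ofReal ((2 : ℝ) ^ (-(k : ℤ))) ≤
        volume {x : ℝ |
          ENNReal.ofReal ((2 : ℝ) ^ (-(1 : ℝ) / 2) * 2 ^ k) ≤ avgOp1 (1 / 2) (cantorF j) x}) ∧
    (∀ q : ℝ, 0 < q → (⨆ j : ℕ, L1qNorm q (avgOp1 (1 / 2) (cantorF j))) = ⊤) :=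
  ⟨part1, part2, part3⟩
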